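/- Let G be a group and K a field. In the ℓEAS ℓEAS(KG) on the group algebra KG given by Φ(g⊗h) = gh⊗g on group elements, an element a = Σ_{α∈G} a_α·α is a nonzero special vector of eigenvalue 1 (i.e. Φ(a⊗a) = a⊗a) if and only if there exist a nonzero scalar λ and a subgroup H ≤ G such that a = λ·Σ_{α∈H} α; in particular a_β(a_α − a_{β⁻¹α}) = 0 for all α,β ∈ G characterizes such a. -/

import Mathlib

open TensorProduct

open scoped Classical in
theorem stmt19 {K : Type*} [Field K] {G : Type*} [Group G]
    (Φ : MonoidAlgebra K G ⊗[K] MonoidAlgebra K G →ₗ[K]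
          MonoidAlgebra K G ⊗[K] MonoidAlgebra K G)
    (hΦ : ∀ g h : G,
      Φ (MonoidAlgebra.of K G g ⊗ₜ[K] MonoidAlgebra.of K G h) =
        MonoidAlgebra.of K G (g * h) ⊗ₜ[K] MonoidAlgebra.of K G g)
    (a : MonoidAlgebra K G) (ha : a ≠ 0) :
    (Φ (a ⊗ₜ[K] a) = a ⊗ₜ[K] a ↔
      ∃ lam : K, lam ≠ 0 ∧ ∃ H : Subgroup G,
        ∀ α : G, a.coeff α = if α ∈ H then lam else 0) ∧
    (Φ (a ⊗ₜ[K] a) = a ⊗ₜ[K] a ↔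
      ∀ α β : G, a.coeff β * (a.coeff α - a.coeff (β⁻¹ * α)) = 0) := by
  -- Step 1: the coefficient characterization
  have key : Φ (a ⊗ₜ[K] a) = a ⊗ₜ[K] a ↔
      ∀ α β : G, a.coeff β * (a.coeff α - a.coeff (β⁻¹ * α)) = 0 := by
    let e : MonoidAlgebra K G ⊗[K] MonoidAlgebra K G ≃ₗ[K] (G × G →₀ K) :=
      (TensorProduct.congr (MonoidAlgebra.coeffLinearEquiv K) (MonoidAlgebra.coeffLinearEquiv K)).trans
        (finsuppTensorFinsupp' K G G)
    have he : ∀ (f g : MonoidAlgebra K G) (x y : G),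
        e (f ⊗ₜ[K] g) (x, y) = f.coeff x * g.coeff y := fun f g x y =>
      finsuppTensorFinsupp'_apply_apply K G G f.coeff g.coeff x y
    have expand : a ⊗ₜ[K] a =
        ∑ g ∈ a.coeff.support, ∑ h ∈ a.coeff.support,
          (MonoidAlgebra.single g (a.coeff g) : MonoidAlgebra K G) ⊗ₜ[K]
            (MonoidAlgebra.single h (a.coeff h) : MonoidAlgebra K G) := by
      conv_lhs => rw [← MonoidAlgebra.sum_coeff_single a]
      rw [Finsupp.sum, TensorProduct.sum_tmul]
      exact Finset.sum_congr rfl fun g _ => TensorProduct.tmul_sum _ _ _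
    have hsingle : ∀ g : G, ∀ c : K,
        (MonoidAlgebra.single g c : MonoidAlgebra K G) = c • MonoidAlgebra.of K G g := by
      intro g c
      simp [MonoidAlgebra.of_apply, MonoidAlgebra.smul_single']
    have hPhi : Φ (a ⊗ₜ[K] a) =
        ∑ g ∈ a.coeff.support, ∑ h ∈ a.coeff.support, (a.coeff g * a.coeff h) •
          (MonoidAlgebra.of K G (g * h) ⊗ₜ[K] MonoidAlgebra.of K G g) := by
      rw [expand, map_sum]
      refine Finset.sum_congr rfl fun g _ => ?_
      rw [map_sum]
      refine Finset.sum_congr rfl fun h _ => ?_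
      rw [hsingle g, hsingle h, TensorProduct.smul_tmul_smul, map_smul, hΦ]
    have coeff : ∀ x y : G, e (Φ (a ⊗ₜ[K] a)) (x, y) = a.coeff y * a.coeff (y⁻¹ * x) := by
      intro x y
      rw [hPhi]
      erw [map_sum e.toLinearMap _ a.coeff.support]
      rw [Finsupp.finset_sum_apply]
      have hterm : ∀ g : G,
          (e (∑ h ∈ a.coeff.support, (a.coeff g * a.coeff h) •
            (MonoidAlgebra.of K G (g * h) ⊗ₜ[K] MonoidAlgebra.of K G g))) (x, y)
          = ∑ h ∈ a.coeff.support, (a.coeff g * a.coeff h) *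
              ((if g * h = x then (1:K) else 0) * (if g = y then (1:K) else 0)) := by
        intro g
        erw [map_sum e.toLinearMap _ a.coeff.support]
        rw [Finsupp.finset_sum_apply]
        refine Finset.sum_congr rfl fun h _ => ?_
        rw [map_smul, Finsupp.smul_apply, MonoidAlgebra.of_apply, MonoidAlgebra.of_apply]
        erw [he]
        simp [Finsupp.single_apply, smul_eq_mul]
      calc (∑ g ∈ a.coeff.support, (e (∑ h ∈ a.coeff.support, (a.coeff g * a.coeff h) •
            (MonoidAlgebra.of K G (g * h) ⊗ₜ[K] MonoidAlgebra.of K G g))) (x, y))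
          = ∑ g ∈ a.coeff.support, ∑ h ∈ a.coeff.support, (a.coeff g * a.coeff h) *
              ((if g * h = x then (1:K) else 0) * (if g = y then (1:K) else 0)) :=
            Finset.sum_congr rfl fun g _ => hterm g
        _ = a.coeff y * a.coeff (y⁻¹ * x) := by
            rw [Finset.sum_eq_single y]
            · rw [Finset.sum_eq_single (y⁻¹ * x)]
              · by_cases hx : y * (y⁻¹ * x) = x
                · simp [hx]
                · exact absurd (by group) hx
              · intro h _ hne
                have : y * h ≠ x := by
                  intro hc; apply hne; rw [← hc]; group
                simp [this]
              · intro hy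
                rw [Finsupp.notMem_support_iff.mp hy]
                simp
            · intro g _ hne
              apply Finset.sum_eq_zero
              intro h _
              simp [hne]
            · intro hy
              apply Finset.sum_eq_zero
              intro h _
              rw [Finsupp.notMem_support_iff.mp hy]
              simp
    have coeff2 : ∀ x y : G, e (a ⊗ₜ[K] a) (x, y) = a.coeff x * a.coeff y := fun x y => he a a x y
    constructor
    · intro hEq α β
      have := coeff α β
      rw [hEq, coeff2] at this
      linear_combination this
    · intro hcond
      apply e.injective
      ext ⟨x, y⟩
      rw [coeff, coeff2]
      have := hcond x y
      have h2 : a.coeff y * a.coeff x = a.coeff y * a.coeff (y⁻¹ * x) := by linear_combination this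
      rw [← h2]; ring
  refine ⟨?_, key⟩
  rw [key]
  constructor
  · intro hcond
    obtain ⟨β₀, hβ₀⟩ : ∃ β, a.coeff β ≠ 0 := by
      by_contra h
      push_neg at h
      exact ha (MonoidAlgebra.ext (Finsupp.ext fun g => h g))
    have hval : ∀ β : G, a.coeff β ≠ 0 → a.coeff β = a.coeff 1 := by
      intro β hβ
      have := hcond β β
      rw [inv_mul_cancel] at this
      rcases mul_eq_zero.mp this with h | h
      · exact absurd h hβ
      · exact sub_eq_zero.mp h
    have hlam : a.coeff 1 ≠ 0 := by
      rw [← hval β₀ hβ₀]; exact hβ₀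
    refine ⟨a.coeff 1, hlam, ⟨⟨⟨{g | a.coeff g ≠ 0}, ?_⟩, ?_⟩, ?_⟩, ?_⟩
    · -- mul_mem
      intro g h hg hh
      have hc := hcond (g * h) g
      rcases mul_eq_zero.mp hc with h1 | h1
      · exact absurd h1 hg
      · have : a.coeff (g * h) = a.coeff (g⁻¹ * (g * h)) := sub_eq_zero.mp h1
        rw [inv_mul_cancel_left] at this
        simpa [Set.mem_setOf_eq, this] using hh
    · -- one_mem
      exact hlam
    · -- inv_mem
      intro g hg
      have hc := hcond 1 g
      rcases mul_eq_zero.mp hc with h1 | h1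
      · exact absurd h1 hg
      · have : a.coeff 1 = a.coeff (g⁻¹ * 1) := sub_eq_zero.mp h1
        rw [mul_one] at this
        simpa [Set.mem_setOf_eq, ← this] using hlam
    · intro α
      by_cases hα : a.coeff α = 0
      · simp [hα, Subgroup.mem_mk, Submonoid.mem_mk, Subsemigroup.mem_mk, Set.mem_setOf_eq]
      · simp only [Subgroup.mem_mk, Submonoid.mem_mk, Subsemigroup.mem_mk,
          Set.mem_setOf_eq]
        rw [if_pos hα]
        exact hval α hα
  · rintro ⟨lam, hlam, H, hH⟩ α β
    by_cases hβ : β ∈ H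
    · have hiff : (β⁻¹ * α ∈ H) ↔ (α ∈ H) :=
        Subgroup.mul_mem_cancel_left H (H.inv_mem hβ)
      rw [hH α, hH (β⁻¹ * α)]
      by_cases hα : α ∈ H
      · rw [if_pos hα, if_pos (hiff.mpr hα), sub_self, mul_zero]
      · rw [if_neg hα, if_neg (fun h => hα (hiff.mp h)), sub_self, mul_zero]
    · rw [hH β, if_neg hβ, zero_mul]
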